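/- Let 0 < ν < 1/4 and c₀ ≥ 0, and let g : ℝ → [0, ∞) be measurable with ∫_ℝ g(τ)² dτ < ∞ and with |τ|·g(τ)² ≤ c₀·g(τ) for almost every τ ∈ ℝ. Then ∫_ℝ |τ|^{2ν} g(τ)² dτ < ∞. -/
import Mathlib


open MeasureTheory Set
open scoped ENNReal

/-- The key quantitative step (3.22)–(3.29) in the proof of Lemma 3.2: if `g ≥ 0`
is square integrable and satisfies `|τ| g(τ)² ≤ c₀ g(τ)` almost everywhere, then
the weighted integral `∫ |τ|^{2ν} g(τ)² dτ` is finite for `0 < ν < 1/4`. -/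
theorem stmt_5 (ν : ℝ) (hν₀ : 0 < ν) (hν₁ : ν < 1 / 4)
    (c₀ : ℝ) (hc₀ : 0 ≤ c₀)
    (g : ℝ → ℝ) (hgmeas : Measurable g) (hgnonneg : ∀ τ, 0 ≤ g τ)
    (hgL2 : (∫⁻ τ : ℝ, ENNReal.ofReal (g τ ^ 2)) < ⊤)
    (hgptwise : ∀ᵐ τ : ℝ, |τ| * g τ ^ 2 ≤ c₀ * g τ) :
    (∫⁻ τ : ℝ, ENNReal.ofReal (|τ| ^ (2 * ν) * g τ ^ 2)) < ⊤ := by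
  set a : ℝ := 4 * ν - 2 with ha
  have ha1 : a < -1 := by simp only [ha]; linarith
  set s : Set ℝ := Iio (-1) ∪ Ioi 1 with hs
  have hsm : MeasurableSet s := (measurableSet_Iio).union measurableSet_Ioi
  set H : ℝ → ℝ := s.indicator (fun t => |t| ^ a) with hH
  have hfm : Measurable (fun t : ℝ => |t| ^ a) := by measurability
  have hHm : Measurable H := hfm.indicator hsm
  have hHnonneg : ∀ t, 0 ≤ H t := fun t =>
    Set.indicator_nonneg (fun x _ => Real.rpow_nonneg (abs_nonneg x) a) t
  -- integrability of the tail
  have hIoi : IntegrableOn (fun t : ℝ => |t| ^ a) (Ioi 1) := by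
    refine (integrableOn_Ioi_rpow_of_lt ha1 one_pos).congr_fun (fun x hx => ?_) measurableSet_Ioi
    rw [abs_of_pos (lt_trans one_pos hx)]
  have hIio : IntegrableOn (fun t : ℝ => |t| ^ a) (Iio (-1)) := by
    have h1 : Integrable ((Ioi (1:ℝ)).indicator (fun t => |t| ^ a)) := by
      rwa [integrable_indicator_iff measurableSet_Ioi]
    have h2 := h1.comp_neg
    have h3 : (fun x : ℝ => (Ioi (1:ℝ)).indicator (fun t => |t| ^ a) (-x))
        = (Iio (-1:ℝ)).indicator (fun t => |t| ^ a) := by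
      funext x
      by_cases hx : x < -1
      · have h4 : (1:ℝ) < -x := by linarith
        simp [Set.indicator_apply, mem_Ioi, mem_Iio, h4, hx, abs_neg]
      · have h4 : ¬ (1:ℝ) < -x := by push_neg at hx ⊢; linarith
        simp [Set.indicator_apply, mem_Ioi, mem_Iio, h4, hx]
    rw [h3] at h2
    rwa [integrable_indicator_iff measurableSet_Iio] at h2
  have hHint : Integrable H := by
    rw [hH, integrable_indicator_iff hsm]
    exact hIio.union hIoi
  have hHfin : (∫⁻ τ : ℝ, ENNReal.ofReal (H τ)) < ⊤ := hHint.lintegral_lt_top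
  -- pointwise bound
  have hbound : ∀ᵐ τ : ℝ,
      ENNReal.ofReal (|τ| ^ (2 * ν) * g τ ^ 2)
        ≤ ENNReal.ofReal ((1 + c₀ / 2) * g τ ^ 2) + ENNReal.ofReal ((c₀ / 2) * H τ) := by
    filter_upwards [hgptwise] with τ hτ
    have hG : 0 ≤ g τ := hgnonneg τ
    have key : |τ| ^ (2 * ν) * g τ ^ 2 ≤ (1 + c₀ / 2) * g τ ^ 2 + (c₀ / 2) * H τ := by
      by_cases h1 : |τ| ≤ 1
      · have hle : |τ| ^ (2 * ν) ≤ 1 :=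
          Real.rpow_le_one (abs_nonneg τ) h1 (by linarith)
        have hHn : 0 ≤ (c₀ / 2) * H τ :=
          mul_nonneg (by linarith) (hHnonneg τ)
        nlinarith [sq_nonneg (g τ)]
      · push_neg at h1
        have hτpos : (0:ℝ) < |τ| := lt_trans one_pos h1
        have hmem : τ ∈ s := by
          rcases abs_cases τ with ⟨h, _⟩ | ⟨h, _⟩
          · exact Or.inr (by simpa [Ioi] using h ▸ h1)
          · exact Or.inl (by simp only [mem_Iio]; linarith [h ▸ h1])
        have hHτ : H τ = |τ| ^ a := Set.indicator_of_mem hmem _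
        set A : ℝ := |τ| ^ (2 * ν - 1) with hA
        have hAnn : 0 ≤ A := Real.rpow_nonneg (abs_nonneg τ) _
        have e1 : |τ| ^ (2 * ν) = A * |τ| := by
          rw [hA, ← Real.rpow_add_one hτpos.ne']
          norm_num
        have e2 : A * A = |τ| ^ a := by
          rw [hA, ← Real.rpow_add hτpos, ha]; congr 1; ring
        have step : A * (|τ| * g τ ^ 2) ≤ A * (c₀ * g τ) :=
          mul_le_mul_of_nonneg_left hτ hAnn
        rw [hHτ, e1, ← e2]
        nlinarith [sq_nonneg (A - g τ), sq_nonneg (g τ)]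
    calc ENNReal.ofReal (|τ| ^ (2 * ν) * g τ ^ 2)
        ≤ ENNReal.ofReal ((1 + c₀ / 2) * g τ ^ 2 + (c₀ / 2) * H τ) :=
          ENNReal.ofReal_le_ofReal key
      _ ≤ _ := ENNReal.ofReal_add_le
  calc (∫⁻ τ : ℝ, ENNReal.ofReal (|τ| ^ (2 * ν) * g τ ^ 2))
      ≤ ∫⁻ τ : ℝ, (ENNReal.ofReal ((1 + c₀ / 2) * g τ ^ 2)
          + ENNReal.ofReal ((c₀ / 2) * H τ)) := lintegral_mono_ae hbound
    _ = (∫⁻ τ : ℝ, ENNReal.ofReal ((1 + c₀ / 2) * g τ ^ 2))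
          + ∫⁻ τ : ℝ, ENNReal.ofReal ((c₀ / 2) * H τ) := by
        refine lintegral_add_left ?_ _
        exact (ENNReal.measurable_ofReal.comp (((hgmeas.pow_const 2).const_mul _)))
    _ < ⊤ := by
        refine ENNReal.add_lt_top.2 ⟨?_, ?_⟩
        · calc (∫⁻ τ : ℝ, ENNReal.ofReal ((1 + c₀ / 2) * g τ ^ 2))
              = ENNReal.ofReal (1 + c₀ / 2) * ∫⁻ τ : ℝ, ENNReal.ofReal (g τ ^ 2) := by
                rw [← lintegral_const_mul' _ _ ENNReal.ofReal_ne_top]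
                congr 1; funext τ
                rw [← ENNReal.ofReal_mul (by linarith)]
            _ < ⊤ := ENNReal.mul_lt_top ENNReal.ofReal_lt_top hgL2
        · calc (∫⁻ τ : ℝ, ENNReal.ofReal ((c₀ / 2) * H τ))
              = ENNReal.ofReal (c₀ / 2) * ∫⁻ τ : ℝ, ENNReal.ofReal (H τ) := by
                rw [← lintegral_const_mul' _ _ ENNReal.ofReal_ne_top]
                congr 1; funext τ
                rw [← ENNReal.ofReal_mul (by linarith)]
            _ < ⊤ := ENNReal.mul_lt_top ENNReal.ofReal_lt_top hHfin
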